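/- arXiv:2507.17666 — 6 statements merged into one kernel-verified Lean document; each statement's English description precedes it below -/
import Mathlib

section
/- For all reals a, b, c with a ≥ b ≥ c ≥ 0 and a + b + c ≤ 1, we have (1/6)(1 - a^3 - b^3 - c^3) - (1/8)(1 - a^2 - b^2 - c(1 - a - b))^2 ≤ 3/32. -/
set_option maxHeartbeats 2000000

theorem final_three_var_ineq (a b c : ℝ) (hc : 0 ≤ c) (hcb : c ≤ b) (hba : b ≤ a)
    (hsum : a + b + c ≤ 1) :
    (1 / 6) * (1 - a ^ 3 - b ^ 3 - c ^ 3)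
      - (1 / 8) * (1 - a ^ 2 - b ^ 2 - c * (1 - a - b)) ^ 2 ≤ 3 / 32 := by
  have hx : 0 ≤ a - b := by linarith
  have hy : 0 ≤ b - c := by linarith
  have hu : 0 ≤ 1 - a - b - c := by linarith
  have key : 96 * (3 / 32 - ((1 / 6) * (1 - a ^ 3 - b ^ 3 - c ^ 3)
      - (1 / 8) * (1 - a ^ 2 - b ^ 2 - c * (1 - a - b)) ^ 2)) =
      6 * ((a - b) * (2 * a + 2 * b - 1)) ^ 2
      + 3 * ((a - b) ^ 2) ^ 2
      + 5 * ((1 - a - b - c) ^ 2) ^ 2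
      + 36 * (c * (1 - a - b - c)) * (1 - a - b - c) ^ 2
      + 66 * (c * (1 - a - b - c)) ^ 2
      + 12 * (c * (1 - a - b - c)) * c ^ 2
      + 9 * (c ^ 2) ^ 2
      + 40 * ((b - c) * (1 - a - b - c)) * (1 - a - b - c) ^ 2
      + 168 * ((b - c) * (1 - a - b - c)) * (c * (1 - a - b - c))
      + 120 * ((b - c) * (1 - a - b - c)) * c ^ 2
      + 24 * ((b - c) * c) * c ^ 2
      + 72 * ((b - c) * (1 - a - b - c)) ^ 2
      + 96 * ((b - c) * (1 - a - b - c)) * ((b - c) * c)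
      + 24 * ((b - c) * c) ^ 2
      + 20 * ((a - b) * (1 - a - b - c)) * (1 - a - b - c) ^ 2
      + 84 * ((a - b) * (1 - a - b - c)) * (c * (1 - a - b - c))
      + 60 * ((a - b) * (1 - a - b - c)) * c ^ 2
      + 12 * ((a - b) * c) * c ^ 2
      + 72 * ((a - b) * (1 - a - b - c)) * ((b - c) * (1 - a - b - c))
      + 96 * ((a - b) * (1 - a - b - c)) * ((b - c) * c)
      + 24 * ((a - b) * c) * ((b - c) * c) := by ring
  have t0 : (0:ℝ) ≤ 6 * ((a - b) * (2 * a + 2 * b - 1)) ^ 2 := by have h := sq_nonneg ((a - b) * (2 * a + 2 * b - 1)); linarith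
  have t1 : (0:ℝ) ≤ 3 * ((a - b) ^ 2) ^ 2 := by have h := sq_nonneg ((a - b) ^ 2); linarith
  have t2 : (0:ℝ) ≤ 5 * ((1 - a - b - c) ^ 2) ^ 2 := by have h := sq_nonneg ((1 - a - b - c) ^ 2); linarith
  have t3 : (0:ℝ) ≤ 36 * (c * (1 - a - b - c)) * (1 - a - b - c) ^ 2 := by have h := mul_nonneg (mul_nonneg hc hu) (sq_nonneg (1 - a - b - c)); linarith
  have t4 : (0:ℝ) ≤ 66 * (c * (1 - a - b - c)) ^ 2 := by have h := sq_nonneg (c * (1 - a - b - c)); linarith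
  have t5 : (0:ℝ) ≤ 12 * (c * (1 - a - b - c)) * c ^ 2 := by have h := mul_nonneg (mul_nonneg hc hu) (sq_nonneg c); linarith
  have t6 : (0:ℝ) ≤ 9 * (c ^ 2) ^ 2 := by have h := sq_nonneg (c ^ 2); linarith
  have t7 : (0:ℝ) ≤ 40 * ((b - c) * (1 - a - b - c)) * (1 - a - b - c) ^ 2 := by have h := mul_nonneg (mul_nonneg hy hu) (sq_nonneg (1 - a - b - c)); linarith
  have t8 : (0:ℝ) ≤ 168 * ((b - c) * (1 - a - b - c)) * (c * (1 - a - b - c)) := by have h := mul_nonneg (mul_nonneg hy hu) (mul_nonneg hc hu); linarith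
  have t9 : (0:ℝ) ≤ 120 * ((b - c) * (1 - a - b - c)) * c ^ 2 := by have h := mul_nonneg (mul_nonneg hy hu) (sq_nonneg c); linarith
  have t10 : (0:ℝ) ≤ 24 * ((b - c) * c) * c ^ 2 := by have h := mul_nonneg (mul_nonneg hy hc) (sq_nonneg c); linarith
  have t11 : (0:ℝ) ≤ 72 * ((b - c) * (1 - a - b - c)) ^ 2 := by have h := sq_nonneg ((b - c) * (1 - a - b - c)); linarith
  have t12 : (0:ℝ) ≤ 96 * ((b - c) * (1 - a - b - c)) * ((b - c) * c) := by have h := mul_nonneg (mul_nonneg hy hu) (mul_nonneg hy hc); linarith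
  have t13 : (0:ℝ) ≤ 24 * ((b - c) * c) ^ 2 := by have h := sq_nonneg ((b - c) * c); linarith
  have t14 : (0:ℝ) ≤ 20 * ((a - b) * (1 - a - b - c)) * (1 - a - b - c) ^ 2 := by have h := mul_nonneg (mul_nonneg hx hu) (sq_nonneg (1 - a - b - c)); linarith
  have t15 : (0:ℝ) ≤ 84 * ((a - b) * (1 - a - b - c)) * (c * (1 - a - b - c)) := by have h := mul_nonneg (mul_nonneg hx hu) (mul_nonneg hc hu); linarith
  have t16 : (0:ℝ) ≤ 60 * ((a - b) * (1 - a - b - c)) * c ^ 2 := by have h := mul_nonneg (mul_nonneg hx hu) (sq_nonneg c); linarith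
  have t17 : (0:ℝ) ≤ 12 * ((a - b) * c) * c ^ 2 := by have h := mul_nonneg (mul_nonneg hx hc) (sq_nonneg c); linarith
  have t18 : (0:ℝ) ≤ 72 * ((a - b) * (1 - a - b - c)) * ((b - c) * (1 - a - b - c)) := by have h := mul_nonneg (mul_nonneg hx hu) (mul_nonneg hy hu); linarith
  have t19 : (0:ℝ) ≤ 96 * ((a - b) * (1 - a - b - c)) * ((b - c) * c) := by have h := mul_nonneg (mul_nonneg hx hu) (mul_nonneg hy hc); linarith
  have t20 : (0:ℝ) ≤ 24 * ((a - b) * c) * ((b - c) * c) := by have h := mul_nonneg (mul_nonneg hx hc) (mul_nonneg hy hc); linarith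
  linarith [key, t0, t1, t2, t3, t4, t5, t6, t7, t8, t9, t10, t11, t12, t13, t14, t15, t16, t17, t18, t19, t20]
end

section
/- Let x_1,...,x_n be nonnegative reals with ∑ x_i = 1 and n ≥ 1. Then (1/6)(1 - ∑ x_i^3) - (1/8)(1 - ∑ x_i^2)^2 ≤ 3/32. -/
lemma three_atom (a b c : ℝ) (hb : 0 ≤ b) (hc : c ≤ 1/3) (h : a + b + c = 1) :
    7 ≤ 16*(a^3+b^3+c^3) + 12*(1-a^2-b^2-c^2)^2 := by
  have hb' : b = 1 - a - c := by linarith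
  subst hb'
  have h2 : 0 ≤ ((1-c)^2/4 - a*(1-a-c)) *
      ((1-c) - (1 - (1-c)^2 - c^2) - a*(1-a-c) - (1-c)^2/4) := by
    have hm : a*(1-a-c) ≤ (1-c)^2/4 := by nlinarith [sq_nonneg (a-(1-a-c))]
    have hf : 0 ≤ (1-c) - (1 - (1-c)^2 - c^2) - 2*((1-c)^2/4) := by nlinarith
    exact mul_nonneg (by linarith) (by linarith)
  have h3 : 0 ≤ c^2*(9*c^2-8*c+2) := by
    have : (0:ℝ) ≤ 9*c^2-8*c+2 := by nlinarith [sq_nonneg (9*c-4)]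
    exact mul_nonneg (sq_nonneg c) this
  nlinarith [h2, h3]

lemma capped_case (a b : ℝ) (ha : 1/9 ≤ a) (hb0 : 0 ≤ b) (hb : b ≤ (1-a)/2) :
    7 ≤ 16*(a^3 + b^2*(1-a)) + 12*(1-a)^2*(1+a-b)^2 := by
  have hbr : 0 ≤ ((1-a)/2 - b) * ((1-a) * (3*(1-a)*((1+a-b) + (1+3*a)/2) - 4*(b + (1-a)/2))) := by
    have h1 : 0 ≤ 3*(1-a)*((1+a-b) + (1+3*a)/2) - 4*(b + (1-a)/2) := by nlinarith
    exact mul_nonneg (by linarith) (mul_nonneg (by linarith) h1)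
  have h3 : 0 ≤ a^2*(9*a^2-8*a+2) := by
    have : (0:ℝ) ≤ 9*a^2-8*a+2 := by nlinarith [sq_nonneg (9*a-4)]
    exact mul_nonneg (sq_nonneg a) this
  nlinarith [hbr, h3]

lemma keyI (A B r s w : ℝ) (hA : 1/3 ≤ A) (hB0 : 0 ≤ B) (hBA : B ≤ A)
    (hr0 : 0 ≤ r) (hrB : r ≤ B) (hsum : A + B + r = 1)
    (hs0 : 0 ≤ s) (hsr : s ≤ r^2) (hw0 : 0 ≤ w) (hcs : s^2 ≤ r*w) :
    7 ≤ 16*(A^3+B^3+w) + 12*(1-A^2-B^2-s)^2 := by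
  have hr13 : r ≤ 1/3 := by linarith
  have hL1 : 7 ≤ 16*(A^3+B^3+r^3) + 12*(1-A^2-B^2-r^2)^2 :=
    three_atom A B r hB0 hr13 hsum
  rcases eq_or_lt_of_le hr0 with h0 | hrpos
  · have hr' : r = 0 := h0.symm
    have hs : s = 0 := by nlinarith
    subst hr' hs
    nlinarith [hL1]
  · have hvertex : 0 ≤ (r^2 - s) * (12*r*(1-A^2-B^2) - 8*(s+r^2) - 6*r*(s+r^2)) := by
      have h4 : 4*r + 3*r^2 ≤ 3*(1-A^2-B^2) := by
        nlinarith [mul_nonneg hr0 (by linarith : 0 ≤ 2 + 3*A - 3*r),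
          mul_nonneg (by linarith : 0 ≤ B - r) (by linarith : 0 ≤ (3:ℝ))]
      have h5 : 0 ≤ 12*r*(1-A^2-B^2) - 8*(s+r^2) - 6*r*(s+r^2) := by
        nlinarith [mul_nonneg hr0 (by linarith : 0 ≤ r^2 - s)]
      exact mul_nonneg (by linarith) h5
    have hident : (16*(A^3+B^3+w) + 12*(1-A^2-B^2-s)^2)*r - (16*(A^3+B^3+r^3) + 12*(1-A^2-B^2-r^2)^2)*r
        = 16*(r*w - s^2) + 2*((r^2 - s) * (12*r*(1-A^2-B^2) - 8*(s+r^2) - 6*r*(s+r^2))) := by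
      ring
    have hmul : (16*(A^3+B^3+r^3) + 12*(1-A^2-B^2-r^2)^2) * r ≤ (16*(A^3+B^3+w) + 12*(1-A^2-B^2-s)^2) * r := by
      linarith [hvertex, hcs, hident]
    have := le_of_mul_le_mul_right hmul hrpos
    linarith

lemma keyII (A B r s w : ℝ) (hA : 5/14 ≤ A) (hB0 : 0 ≤ B) (hBA : B ≤ A)
    (hr0 : 0 ≤ r) (hBr : B ≤ r) (hsum : A + B + r = 1)
    (hs0 : 0 ≤ s) (hsr : s ≤ r*B) (hw0 : 0 ≤ w) (hcs : s^2 ≤ r*w) :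
    7 ≤ 16*(A^3+B^3+w) + 12*(1-A^2-B^2-s)^2 := by
  have hb2 : B ≤ (1-A)/2 := by linarith
  have hL2 : 7 ≤ 16*(A^3 + B^2*(1-A)) + 12*(1-A)^2*(1+A-B)^2 :=
    capped_case A B (by linarith) hB0 hb2
  have hid : 16*(A^3 + B^2*(1-A)) + 12*(1-A)^2*(1+A-B)^2
      = 16*(A^3+B^3+r*B^2) + 12*(1-A^2-B^2-r*B)^2 := by
    have hr' : r = 1 - A - B := by linarith
    subst hr'; ring
  rw [hid] at hL2
  rcases eq_or_lt_of_le hr0 with h0 | hrpos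
  · have hr' : r = 0 := h0.symm
    have hB : B = 0 := by linarith
    have hs : s = 0 := by
      have : s ≤ 0 := by rw [hr'] at hsr; simpa using hsr
      linarith
    subst hr' hB hs
    nlinarith [hL2]
  · have hvertex : 0 ≤ (r*B - s) * (12*r*(1-A^2-B^2) - 8*(s+r*B) - 6*r*(s+r*B)) := by
      have h4 : 4*B + 3*r*B ≤ 3*(1-A^2-B^2) := by
        nlinarith [mul_nonneg hB0 (by linarith : 0 ≤ 6*A - 6*B + 2),
          mul_nonneg (by linarith : 0 ≤ r - B) (by linarith : 0 ≤ 3*(1 + A - B))]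
      have h5 : 0 ≤ 12*r*(1-A^2-B^2) - 8*(s+r*B) - 6*r*(s+r*B) := by
        nlinarith [mul_nonneg hr0 (by linarith : 0 ≤ r*B - s), mul_nonneg hr0 hB0]
      exact mul_nonneg (by linarith) h5
    have hident : (16*(A^3+B^3+w) + 12*(1-A^2-B^2-s)^2)*r - (16*(A^3+B^3+r*B^2) + 12*(1-A^2-B^2-r*B)^2)*r
        = 16*(r*w - s^2) + 2*((r*B - s) * (12*r*(1-A^2-B^2) - 8*(s+r*B) - 6*r*(s+r*B))) := by
      ring
    have hmul : (16*(A^3+B^3+r*B^2) + 12*(1-A^2-B^2-r*B)^2) * r ≤ (16*(A^3+B^3+w) + 12*(1-A^2-B^2-s)^2) * r := by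
      linarith [hvertex, hcs, hident]
    have := le_of_mul_le_mul_right hmul hrpos
    linarith

/-- Cauchy–Schwarz: (∑ x²)² ≤ (∑ x)(∑ x³) for nonneg x. -/
lemma cauchy_23 (T : Finset ℕ) (x : ℕ → ℝ) (hx : ∀ i ∈ T, 0 ≤ x i) :
    (∑ i ∈ T, x i ^ 2) ^ 2 ≤ (∑ i ∈ T, x i) * ∑ i ∈ T, x i ^ 3 :=
  Finset.sum_sq_le_sum_mul_sum_of_sq_eq_mul T hx
    (fun i hi => pow_nonneg (hx i hi) 3) (fun i hi => by ring)

theorem complete_case_bound (n : ℕ) (hn : 1 ≤ n) (x : ℕ → ℝ)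
    (hx : ∀ i ∈ Finset.range n, 0 ≤ x i)
    (hsum : ∑ i ∈ Finset.range n, x i = 1) :
    (1 / 6) * (1 - ∑ i ∈ Finset.range n, x i ^ 3)
      - (1 / 8) * (1 - ∑ i ∈ Finset.range n, x i ^ 2) ^ 2 ≤ 3 / 32 := by
  have hSne : (Finset.range n).Nonempty := ⟨0, Finset.mem_range.2 hn⟩
  obtain ⟨m, hmS, hmax⟩ := (Finset.range n).exists_max_image x hSne
  by_cases hA : x m ≤ 5/14
  · -- small max: global Cauchy suffices
    have hp2le : (∑ i ∈ Finset.range n, x i ^ 2) ≤ 5/14 := by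
      have h1 : (∑ i ∈ Finset.range n, x i ^ 2) ≤ ∑ i ∈ Finset.range n, x m * x i := by
        refine Finset.sum_le_sum fun i hi => ?_
        have := hmax i hi; have := hx i hi; nlinarith
      rw [← Finset.mul_sum, hsum, mul_one] at h1
      linarith
    have hp2nn : 0 ≤ ∑ i ∈ Finset.range n, x i ^ 2 :=
      Finset.sum_nonneg fun i _ => sq_nonneg _
    have hcau := cauchy_23 (Finset.range n) x hx
    rw [hsum, one_mul] at hcau
    nlinarith [mul_nonneg (by linarith : (0:ℝ) ≤ 5 - 14 * ∑ i ∈ Finset.range n, x i ^ 2)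
      (by linarith : (0:ℝ) ≤ 1 - 2 * ∑ i ∈ Finset.range n, x i ^ 2)]
  · push_neg at hA
    set S' := (Finset.range n).erase m with hS'def
    by_cases hS'ne : S'.Nonempty
    · obtain ⟨m2, hm2S', hmax2⟩ := S'.exists_max_image x hS'ne
      have hm2S : m2 ∈ Finset.range n := Finset.mem_of_mem_erase hm2S'
      set T := S'.erase m2 with hTdef
      have hTmem : ∀ i ∈ T, i ∈ Finset.range n := fun i hi =>
        Finset.mem_of_mem_erase (Finset.mem_of_mem_erase hi)
      have hTS' : ∀ i ∈ T, i ∈ S' := fun i hi => Finset.mem_of_mem_erase hi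
      -- sum decompositions
      have hsplit : ∀ f : ℕ → ℝ, (∑ i ∈ Finset.range n, f i) = f m + (f m2 + ∑ i ∈ T, f i) := by
        intro f
        rw [← Finset.add_sum_erase _ f hmS, ← Finset.add_sum_erase _ f hm2S']
      have hP1 := hsplit x
      have hP2 := hsplit (fun i => x i ^ 2)
      have hP3 := hsplit (fun i => x i ^ 3)
      rw [hsum] at hP1
      set A := x m
      set B := x m2
      set r := ∑ i ∈ T, x i with hrdef
      set s := ∑ i ∈ T, x i ^ 2 with hsdef
      set w := ∑ i ∈ T, x i ^ 3 with hwdef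
      have hB0 : 0 ≤ B := hx m2 hm2S
      have hBA : B ≤ A := hmax m2 hm2S
      have hr0 : 0 ≤ r := Finset.sum_nonneg fun i hi => hx i (hTmem i hi)
      have hs0 : 0 ≤ s := Finset.sum_nonneg fun i _ => sq_nonneg _
      have hw0 : 0 ≤ w := Finset.sum_nonneg fun i hi => pow_nonneg (hx i (hTmem i hi)) 3
      have hsrB : s ≤ r * B := by
        have h1 : s ≤ ∑ i ∈ T, B * x i := by
          refine Finset.sum_le_sum fun i hi => ?_
          have h2 := hmax2 i (hTS' i hi); have h3 := hx i (hTmem i hi); nlinarith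
        rw [← Finset.mul_sum] at h1
        linarith [h1, mul_comm B r]
      have hsr2 : s ≤ r ^ 2 := by
        simpa [hsdef, hrdef] using
          Finset.sum_sq_le_sq_sum_of_nonneg (f := x) (s := T) (fun i hi => hx i (hTmem i hi))
      have hcs : s ^ 2 ≤ r * w := cauchy_23 T x (fun i hi => hx i (hTmem i hi))
      have hABr : A + B + r = 1 := by linarith
      have hkey : 7 ≤ 16*(A^3+B^3+w) + 12*(1-A^2-B^2-s)^2 := by
        rcases le_total r B with hrB | hBr
        · exact keyI A B r s w (by linarith) hB0 hBA hr0 hrB hABr hs0 hsr2 hw0 hcs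
        · exact keyII A B r s w (by linarith) hB0 hBA hr0 hBr hABr hs0
            (by linarith [mul_comm B r]) hw0 hcs
      rw [hP2, hP3]
      nlinarith [hkey]
    · -- only one element: x m = 1
      rw [Finset.not_nonempty_iff_eq_empty] at hS'ne
      have h1 : (∑ i ∈ Finset.range n, x i) = x m := by
        rw [← Finset.add_sum_erase _ x hmS, ← hS'def, hS'ne]
        simp
      have hxm : x m = 1 := by rw [← h1, hsum]
      have h2 : (∑ i ∈ Finset.range n, x i ^ 2) = 1 := by
        rw [← Finset.add_sum_erase _ (fun i => x i ^ 2) hmS, ← hS'def, hS'ne, hxm]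
        simp
      have h3 : (∑ i ∈ Finset.range n, x i ^ 3) = 1 := by
        rw [← Finset.add_sum_erase _ (fun i => x i ^ 3) hmS, ← hS'def, hS'ne, hxm]
        simp
      rw [h2, h3]
      norm_num
end

section
/- For all reals p_2, p_3 with there existing nonnegative reals x_1 ≥ x_2 ≥ x_3 ≥ 0, x_1 + x_2 + x_3 ≤ 1, such that p_3 ≥ x_1^3 + x_2^3 + x_3^3 and p_2 ≤ x_1^2 + x_2^2 + x_3(1 - x_1 - x_2): (1/6)(1 - p_3) - (1/8)(1 - p_2)^2 ≤ 3/32 provided p_2 ≤ 1. -/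
private lemma aux_uvc (u v c : ℝ) (hu : 0 ≤ u) (hv : 0 ≤ v) (hc : 0 ≤ c)
    (hsum : u + v + 3 * c ≤ 1) :
    0 ≤ 6*c^2 - 24*c^3 + 27*c^4 + 24*v*c - 96*v*c^2 + 72*v*c^3 + 18*v^2 - 72*v^2*c
      + 66*v^2*c^2 - 16*v^3 + 24*v^3*c + 3*v^4 + 6*u^2 - 24*u^2*c + 18*u^2*c^2
      - 24*u^2*v + 24*u^2*v*c + 6*u^2*v^2 + 3*u^4 := by
  have hw : (0:ℝ) ≤ 1 - u - v - 3*c := by linarith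
  linarith [
    mul_nonneg (mul_nonneg (sq_nonneg (3*u + (0)*v + (-3)*c)) hv) hw,
    sq_nonneg (3*u + (3)*v + (3)*c),
    mul_nonneg (mul_nonneg (mul_nonneg (hv) hc) hw) hw,
    sq_nonneg (3*u + (-3)*v + (-3)*c),
    mul_nonneg (mul_nonneg (sq_nonneg (3*u + (3)*v + (-3)*c)) hc) hc,
    sq_nonneg (0*u + (3)*v + (1)*c),
    mul_nonneg (mul_nonneg (sq_nonneg (3*u + (-3)*v + (1)*c)) hw) hw,
    mul_nonneg (sq_nonneg (1*u + (-3)*v + (-3)*c)) hu,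
    mul_nonneg (mul_nonneg (sq_nonneg (3*u + (3)*v + (-3)*c)) hu) hc,
    mul_nonneg (sq_nonneg (2*u + (-3)*v + (0)*c)) hu,
    mul_nonneg (sq_nonneg (0*u + (3)*v + (1)*c)) hw,
    mul_nonneg (mul_nonneg (sq_nonneg (3*u + (-3)*v + (3)*c)) hc) hc,
    mul_nonneg (sq_nonneg (3*u + (3)*v + (-1)*c)) hc,
    mul_nonneg (sq_nonneg (0*u + (3)*v + (2)*c)) hw,
    mul_nonneg (sq_nonneg (3*u + (-3)*v + (-3)*c)) hv,
    mul_nonneg (mul_nonneg (sq_nonneg (1*u + (3)*v + (2)*c)) hw) hw,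
    mul_nonneg (mul_nonneg (sq_nonneg (3*u + (-3)*v + (-2)*c)) hw) hw,
    mul_nonneg (sq_nonneg (3*u + (3)*v + (-3)*c)) (sq_nonneg u),
    mul_nonneg (mul_nonneg (sq_nonneg (3*u + (-3)*v + (3)*c)) hv) hw,
    mul_nonneg (sq_nonneg (3*u + (-3)*v + (-2)*c)) hw,
    mul_nonneg (mul_nonneg (sq_nonneg (3*u + (3)*v + (-3)*c)) hv) hw,
    mul_nonneg (mul_nonneg (sq_nonneg (3*u + (3)*v + (0)*c)) hc) hw,
    mul_nonneg (sq_nonneg (3*u + (3)*v + (1)*c)) hw,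
    mul_nonneg (mul_nonneg (sq_nonneg (3*u + (-3)*v + (3)*c)) hu) hw,
    mul_nonneg (mul_nonneg (sq_nonneg (3*u + (0)*v + (3)*c)) hw) hw,
    mul_nonneg (sq_nonneg (3*u + (-3)*v + (-3)*c)) (sq_nonneg u),
    mul_nonneg (mul_nonneg (sq_nonneg (3*u + (3)*v + (-3)*c)) hv) hc,
    mul_nonneg (mul_nonneg (sq_nonneg (3*u + (3)*v + (0)*c)) hw) hw,
    mul_nonneg (mul_nonneg (sq_nonneg (3*u + (3)*v + (-3)*c)) hu) hv,
    mul_nonneg (mul_nonneg (sq_nonneg (3*u + (-3)*v + (-3)*c)) hu) hw]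

theorem p2_p3_bound (p2 p3 : ℝ)
    (h : ∃ x1 x2 x3 : ℝ, 0 ≤ x3 ∧ x3 ≤ x2 ∧ x2 ≤ x1 ∧ x1 + x2 + x3 ≤ 1 ∧
        x1 ^ 3 + x2 ^ 3 + x3 ^ 3 ≤ p3 ∧ p2 ≤ x1 ^ 2 + x2 ^ 2 + x3 * (1 - x1 - x2))
    (hp2 : p2 ≤ 1) :
    (1 / 6) * (1 - p3) - (1 / 8) * (1 - p2) ^ 2 ≤ 3 / 32 := by
  obtain ⟨x1, x2, x3, h0, h32, h21, hsum, hp3, hp2'⟩ := h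
  have hx2 : 0 ≤ x2 := le_trans h0 h32
  have hx1 : 0 ≤ x1 := le_trans hx2 h21
  set q2 := x1 ^ 2 + x2 ^ 2 + x3 * (1 - x1 - x2) with hq2
  have hq2le1 : q2 ≤ 1 := by nlinarith [mul_nonneg hx1 hx2, mul_nonneg hx2 h0]
  have hsq : (1 - q2) ^ 2 ≤ (1 - p2) ^ 2 := by
    have h1 : 0 ≤ 1 - q2 := by linarith
    have h2 : 1 - q2 ≤ 1 - p2 := by linarith
    nlinarith
  have key := aux_uvc (x1 - x2) (1 - x1 - x2 - x3) x3 (by linarith) (by linarith) h0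
    (by linarith)
  have key2 : 0 ≤ 9 + 12 * (1 - q2) ^ 2 - 16 * (1 - (x1 ^ 3 + x2 ^ 3 + x3 ^ 3)) := by
    rw [hq2]; linarith [key, sq_nonneg (x1 - x2)] 
  nlinarith [key2, hsq, hp3]
end

section
/- For nonnegative reals a, b, c with a + b + c = 1: (1/6)(1 - a^3 - b^3 - c^3) - (1/8)(1 - a^2 - b^2 - c^2)^2 ≤ 3/32, with equality when a = b = 1/2, c = 0. -/
private lemma aux (a b c : ℝ) (ha : 0 ≤ a) (hb : 0 ≤ b) (hc : 0 ≤ c)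
    (hca : c ≤ a) (hcb : c ≤ b) (h : a + b + c = 1) :
    (1 / 6) * (1 - a ^ 3 - b ^ 3 - c ^ 3)
        - (1 / 8) * (1 - a ^ 2 - b ^ 2 - c ^ 2) ^ 2 ≤ 3 / 32 := by
  have h13 : (0:ℝ) ≤ 1 - 3*c := by linarith
  have hb' : b = 1 - a - c := by linarith
  subst hb'
  have key : 3/32 - ((1 / 6) * (1 - a ^ 3 - (1-a-c) ^ 3 - c ^ 3)
        - (1 / 8) * (1 - a ^ 2 - (1-a-c) ^ 2 - c ^ 2) ^ 2)
      = (1/2) * (((a-(1-a-c))^2/4)*((a+(1-a-c))*(1-3*c)/2 + (a-(1-a-c))^2/4)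
          + c^2*(9*c^2-8*c+2)/16) := by ring
  nlinarith [mul_nonneg (sq_nonneg (a-(1-a-c)))
      (mul_nonneg (by linarith : (0:ℝ) ≤ a + (1-a-c)) h13),
    sq_nonneg ((a-(1-a-c))^2), sq_nonneg (c*(3*c-4/3)), sq_nonneg c]

theorem three_var_simplex_bound :
    (∀ a b c : ℝ, 0 ≤ a → 0 ≤ b → 0 ≤ c → a + b + c = 1 →
      (1 / 6) * (1 - a ^ 3 - b ^ 3 - c ^ 3)
        - (1 / 8) * (1 - a ^ 2 - b ^ 2 - c ^ 2) ^ 2 ≤ 3 / 32) ∧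
    (1 / 6) * (1 - (1/2:ℝ) ^ 3 - (1/2:ℝ) ^ 3 - 0 ^ 3)
      - (1 / 8) * (1 - (1/2:ℝ) ^ 2 - (1/2:ℝ) ^ 2 - 0 ^ 2) ^ 2 = 3 / 32 := by
  constructor
  · intro a b c ha hb hc habc
    rcases le_total a b with hab | hab <;> rcases le_total b c with hbc | hbc <;>
      rcases le_total a c with hac | hac
    · linarith [aux b c a hb hc ha hab hac (by linarith)]
    · linarith [aux a b c ha hb hc hac (by linarith) habc]
    · linarith [aux b c a hb hc ha hab hac (by linarith)]
    · linarith [aux a b c ha hb hc hac hbc habc]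
    · linarith [aux a c b ha hc hb hab hbc (by linarith)]
    · linarith [aux a c b ha hc hb hab hbc (by linarith)]
    · linarith [aux a b c ha hb hc (by linarith) hbc habc]
    · linarith [aux a b c ha hb hc (by linarith) hbc habc]
  · norm_num
end

section
/- Let G = (V,B) be a graph with non-adjacent vertices a, b, and let x : V → ℝ≥0 with ∑ x_v = 1. Let G_a (resp. G_b) be obtained by deleting b (resp. a) and transferring its weight to a (resp. b). Then a·L(G_a) + b·L(G_b) - (a+b)·L(G) = x_a x_b (x_a + x_b)·((1/2)(S_a + S_b - (S_a - S_b)^2) - S_{a,b}), where S_a = ∑_{v: av ∈ B} x_v, S_b = ∑_{v: bv ∈ B} x_v, and S_{a,b} = ∑_{v: {a,b,v} ∈ E(BF(G))} x_v. -/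
open Finset

/-- Number of edges of `G` among the three pairs of the triple `(u,v,w)`. -/
def edgeCount3 {V : Type*} (G : SimpleGraph V) [DecidableRel G.Adj] (u v w : V) : ℕ :=
  (if G.Adj u v then 1 else 0) + (if G.Adj u w then 1 else 0) + (if G.Adj v w then 1 else 0)

/-- Lagrangian of the 3-graph `BF(G)` (triples spanning at least 2 edges of `G`). -/
noncomputable def lagrangianBF {V : Type*} [Fintype V] [DecidableEq V]
    (G : SimpleGraph V) [DecidableRel G.Adj] (x : V → ℝ) : ℝ :=
  (1 / 6) * ∑ u : V, ∑ v : V, ∑ w : V,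
      (if u ≠ v ∧ u ≠ w ∧ v ≠ w ∧ 2 ≤ edgeCount3 G u v w then x u * x v * x w else 0)
    + (1 / 2) * ∑ u : V, ∑ v : V, (if G.Adj u v then x u ^ 2 * x v else 0)
    - (1 / 2) * ((1 / 2) * ∑ u : V, ∑ v : V, (if G.Adj u v then x u * x v else 0)) ^ 2

/-- Deleting vertex `b` and transferring its weight to `a` is modeled by
setting the weight of `b` to `0` and giving `a` the weight `x a + x b`. -/
noncomputable def transferWeight {V : Type*} [DecidableEq V] (x : V → ℝ) (a b : V) : V → ℝ :=
  Function.update (Function.update x b 0) a (x a + x b)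

namespace DelAux
set_option linter.unusedSectionVars false
variable {V : Type*} [Fintype V] [DecidableEq V] (G : SimpleGraph V) [DecidableRel G.Adj]
lemma cntL (u v c : V) : edgeCount3 G u v c = edgeCount3 G v u c := by
  by_cases h1 : G.Adj u v <;> by_cases h2 : G.Adj u c <;> by_cases h3 : G.Adj v c <;>
    simp [edgeCount3, h1, h2, h3, G.adj_comm v u, G.adj_comm c u, G.adj_comm c v]
lemma cntR (u v c : V) : edgeCount3 G u v c = edgeCount3 G u c v := by
  by_cases h1 : G.Adj u v <;> by_cases h2 : G.Adj u c <;> by_cases h3 : G.Adj v c <;>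
    simp [edgeCount3, h1, h2, h3, G.adj_comm v u, G.adj_comm c u, G.adj_comm c v]
variable (a b : V)
def sAB : Finset V := (Finset.univ.erase a).erase b
lemma mem_sAB {v : V} (h : v ∈ sAB a b) : v ≠ a ∧ v ≠ b := by
  simp only [sAB, mem_erase, mem_univ, and_true] at h
  exact ⟨h.2, h.1⟩
lemma sum_split (hab : a ≠ b) (F : V → ℝ) :
    ∑ v : V, F v = F a + F b + ∑ v ∈ sAB a b, F v := by
  rw [sAB, ← Finset.add_sum_erase _ F (mem_univ a),
    ← Finset.add_sum_erase _ F (mem_erase.2 ⟨Ne.symm hab, mem_univ b⟩), add_assoc]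
lemma pull (c : Finset V) (p : V → Prop) [DecidablePred p] (r : ℝ) (f : V → ℝ) :
    ∑ v ∈ c, (if p v then r * f v else 0) = r * ∑ v ∈ c, (if p v then f v else 0) := by
  rw [Finset.mul_sum]; exact sum_congr rfl fun v _ => by rw [mul_ite, mul_zero]
noncomputable def QQ (c : V) (w : V → ℝ) : ℝ :=
  ∑ u ∈ sAB a b, ∑ v ∈ sAB a b, if u ≠ v ∧ 2 ≤ edgeCount3 G c u v then w u * w v else 0
noncomputable def PP (w : V → ℝ) : ℝ :=
  ∑ v ∈ sAB a b, if 2 ≤ edgeCount3 G a b v then w v else 0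
noncomputable def TT (w : V → ℝ) : ℝ :=
  ∑ u ∈ sAB a b, ∑ v ∈ sAB a b, ∑ c ∈ sAB a b,
    if u ≠ v ∧ u ≠ c ∧ v ≠ c ∧ 2 ≤ edgeCount3 G u v c then w u * w v * w c else 0

lemma blockA (hab : a ≠ b) (w : V → ℝ) :
    ∑ v : V, ∑ c : V,
      (if a ≠ v ∧ a ≠ c ∧ v ≠ c ∧ 2 ≤ edgeCount3 G a v c then w a * w v * w c else 0)
    = w a * QQ G a b a w + 2 * (w a * w b * PP G a b w) := by
  rw [sum_split a b hab]
  have t1 : ∑ c : V,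
      (if a ≠ a ∧ a ≠ c ∧ a ≠ c ∧ 2 ≤ edgeCount3 G a a c then w a * w a * w c else 0) = 0 := by
    simp
  have t2 : ∑ c : V,
      (if a ≠ b ∧ a ≠ c ∧ b ≠ c ∧ 2 ≤ edgeCount3 G a b c then w a * w b * w c else 0)
      = w a * w b * PP G a b w := by
    rw [sum_split a b hab, if_neg (by simp), if_neg (by simp)]
    have key : ∀ c ∈ sAB a b,
        (if a ≠ b ∧ a ≠ c ∧ b ≠ c ∧ 2 ≤ edgeCount3 G a b c then w a * w b * w c else 0)
        = (if 2 ≤ edgeCount3 G a b c then w a * w b * w c else 0) := by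
      intro c hc
      obtain ⟨hca, hcb⟩ := mem_sAB a b hc
      exact if_congr (by simp [hab, Ne.symm hca, Ne.symm hcb]) rfl rfl
    rw [sum_congr rfl key, pull (sAB a b) _ (w a * w b) w, PP]
    ring
  have t3 : ∀ v ∈ sAB a b, ∑ c : V,
      (if a ≠ v ∧ a ≠ c ∧ v ≠ c ∧ 2 ≤ edgeCount3 G a v c then w a * w v * w c else 0)
      = (if 2 ≤ edgeCount3 G a b v then w a * w b * w v else 0)
        + ∑ c ∈ sAB a b,
            (if v ≠ c ∧ 2 ≤ edgeCount3 G a v c then w a * (w v * w c) else 0) := by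
    intro v hv
    obtain ⟨hva, hvb⟩ := mem_sAB a b hv
    rw [sum_split a b hab, if_neg (by simp),
      if_congr (show (a ≠ v ∧ a ≠ b ∧ v ≠ b ∧ 2 ≤ edgeCount3 G a v b)
          ↔ (2 ≤ edgeCount3 G a b v) by rw [cntR]; simp [Ne.symm hva, hab, hvb])
        (show w a * w v * w b = w a * w b * w v by ring) rfl]
    have key : ∀ c ∈ sAB a b,
        (if a ≠ v ∧ a ≠ c ∧ v ≠ c ∧ 2 ≤ edgeCount3 G a v c then w a * w v * w c else 0)
        = (if v ≠ c ∧ 2 ≤ edgeCount3 G a v c then w a * (w v * w c) else 0) := by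
      intro c hc
      obtain ⟨hca, hcb⟩ := mem_sAB a b hc
      exact if_congr (by simp [Ne.symm hva, Ne.symm hca]) (by ring) rfl
    rw [sum_congr rfl key]
    ring
  rw [t1, t2, sum_congr rfl t3, Finset.sum_add_distrib,
    pull (sAB a b) _ (w a * w b) w]
  have : ∑ v ∈ sAB a b, ∑ c ∈ sAB a b,
      (if v ≠ c ∧ 2 ≤ edgeCount3 G a v c then w a * (w v * w c) else 0)
      = w a * QQ G a b a w := by
    rw [QQ, Finset.mul_sum]
    exact sum_congr rfl fun v _ => pull _ _ _ _
  rw [this, PP]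
  ring


lemma blockB (hab : a ≠ b) (w : V → ℝ) :
    ∑ v : V, ∑ c : V,
      (if b ≠ v ∧ b ≠ c ∧ v ≠ c ∧ 2 ≤ edgeCount3 G b v c then w b * w v * w c else 0)
    = w b * QQ G a b b w + 2 * (w a * w b * PP G a b w) := by
  rw [sum_split a b hab]
  have t1 : ∑ c : V,
      (if b ≠ a ∧ b ≠ c ∧ a ≠ c ∧ 2 ≤ edgeCount3 G b a c then w b * w a * w c else 0)
      = w a * w b * PP G a b w := by
    rw [sum_split a b hab, if_neg (by simp), if_neg (by simp)]
    have key : ∀ c ∈ sAB a b,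
        (if b ≠ a ∧ b ≠ c ∧ a ≠ c ∧ 2 ≤ edgeCount3 G b a c then w b * w a * w c else 0)
        = (if 2 ≤ edgeCount3 G a b c then w a * w b * w c else 0) := by
      intro c hc
      obtain ⟨hca, hcb⟩ := mem_sAB a b hc
      exact if_congr (by rw [cntL G b a c]; simp [Ne.symm hab, Ne.symm hca, Ne.symm hcb])
        (by ring) rfl
    rw [sum_congr rfl key, pull (sAB a b) _ (w a * w b) w, PP]
    ring
  have t2 : ∑ c : V,
      (if b ≠ b ∧ b ≠ c ∧ b ≠ c ∧ 2 ≤ edgeCount3 G b b c then w b * w b * w c else 0) = 0 := by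
    simp
  have t3 : ∀ v ∈ sAB a b, ∑ c : V,
      (if b ≠ v ∧ b ≠ c ∧ v ≠ c ∧ 2 ≤ edgeCount3 G b v c then w b * w v * w c else 0)
      = (if 2 ≤ edgeCount3 G a b v then w a * w b * w v else 0)
        + ∑ c ∈ sAB a b,
            (if v ≠ c ∧ 2 ≤ edgeCount3 G b v c then w b * (w v * w c) else 0) := by
    intro v hv
    obtain ⟨hva, hvb⟩ := mem_sAB a b hv
    rw [sum_split a b hab,
      if_congr (show (b ≠ v ∧ b ≠ a ∧ v ≠ a ∧ 2 ≤ edgeCount3 G b v a)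
          ↔ (2 ≤ edgeCount3 G a b v) by
            rw [cntR G b v a, cntL G b a v]; simp [Ne.symm hvb, Ne.symm hab, hva])
        (show w b * w v * w a = w a * w b * w v by ring) rfl,
      if_neg (show ¬(b ≠ v ∧ b ≠ b ∧ v ≠ b ∧ 2 ≤ edgeCount3 G b v b) by simp)]
    have key : ∀ c ∈ sAB a b,
        (if b ≠ v ∧ b ≠ c ∧ v ≠ c ∧ 2 ≤ edgeCount3 G b v c then w b * w v * w c else 0)
        = (if v ≠ c ∧ 2 ≤ edgeCount3 G b v c then w b * (w v * w c) else 0) := by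
      intro c hc
      obtain ⟨hca, hcb⟩ := mem_sAB a b hc
      exact if_congr (by simp [Ne.symm hvb, Ne.symm hcb]) (by ring) rfl
    rw [sum_congr rfl key]
    ring
  rw [t1, t2, sum_congr rfl t3, Finset.sum_add_distrib,
    pull (sAB a b) _ (w a * w b) w]
  have : ∑ v ∈ sAB a b, ∑ c ∈ sAB a b,
      (if v ≠ c ∧ 2 ≤ edgeCount3 G b v c then w b * (w v * w c) else 0)
      = w b * QQ G a b b w := by
    rw [QQ, Finset.mul_sum]
    exact sum_congr rfl fun v _ => pull _ _ _ _
  rw [this, PP]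
  ring

lemma rowS (hab : a ≠ b) (w : V → ℝ) (u : V) (hua : u ≠ a) (hub : u ≠ b) :
    ∑ v : V, ∑ c : V,
      (if u ≠ v ∧ u ≠ c ∧ v ≠ c ∧ 2 ≤ edgeCount3 G u v c then w u * w v * w c else 0)
    = 2 * (if 2 ≤ edgeCount3 G a b u then (w a * w b) * w u else 0)
      + 2 * (w a * ∑ c ∈ sAB a b, (if u ≠ c ∧ 2 ≤ edgeCount3 G a u c then w u * w c else 0))
      + 2 * (w b * ∑ c ∈ sAB a b, (if u ≠ c ∧ 2 ≤ edgeCount3 G b u c then w u * w c else 0))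
      + ∑ v ∈ sAB a b, ∑ c ∈ sAB a b,
          (if u ≠ v ∧ u ≠ c ∧ v ≠ c ∧ 2 ≤ edgeCount3 G u v c then w u * w v * w c else 0) := by
  rw [sum_split a b hab]
  have t1 : ∑ c : V,
      (if u ≠ a ∧ u ≠ c ∧ a ≠ c ∧ 2 ≤ edgeCount3 G u a c then w u * w a * w c else 0)
      = (if 2 ≤ edgeCount3 G a b u then (w a * w b) * w u else 0)
        + w a * ∑ c ∈ sAB a b, (if u ≠ c ∧ 2 ≤ edgeCount3 G a u c then w u * w c else 0) := by
    rw [sum_split a b hab,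
      if_neg (show ¬(u ≠ a ∧ u ≠ a ∧ a ≠ a ∧ 2 ≤ edgeCount3 G u a a) by simp),
      if_congr (show (u ≠ a ∧ u ≠ b ∧ a ≠ b ∧ 2 ≤ edgeCount3 G u a b)
          ↔ (2 ≤ edgeCount3 G a b u) by
            rw [cntL G u a b, cntR G a u b]; simp [hua, hub, hab])
        (show w u * w a * w b = (w a * w b) * w u by ring) rfl]
    have key : ∀ c ∈ sAB a b,
        (if u ≠ a ∧ u ≠ c ∧ a ≠ c ∧ 2 ≤ edgeCount3 G u a c then w u * w a * w c else 0)
        = (if u ≠ c ∧ 2 ≤ edgeCount3 G a u c then w a * (w u * w c) else 0) := by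
      intro c hc
      obtain ⟨hca, hcb⟩ := mem_sAB a b hc
      exact if_congr (by rw [cntL G u a c]; simp [hua, Ne.symm hca]) (by ring) rfl
    rw [sum_congr rfl key, pull (sAB a b) _ (w a) _]
    ring
  have t2 : ∑ c : V,
      (if u ≠ b ∧ u ≠ c ∧ b ≠ c ∧ 2 ≤ edgeCount3 G u b c then w u * w b * w c else 0)
      = (if 2 ≤ edgeCount3 G a b u then (w a * w b) * w u else 0)
        + w b * ∑ c ∈ sAB a b, (if u ≠ c ∧ 2 ≤ edgeCount3 G b u c then w u * w c else 0) := by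
    rw [sum_split a b hab,
      if_congr (show (u ≠ b ∧ u ≠ a ∧ b ≠ a ∧ 2 ≤ edgeCount3 G u b a)
          ↔ (2 ≤ edgeCount3 G a b u) by
            rw [cntR G u b a, cntL G u a b, cntR G a u b]; simp [hua, hub, Ne.symm hab])
        (show w u * w b * w a = (w a * w b) * w u by ring) rfl,
      if_neg (show ¬(u ≠ b ∧ u ≠ b ∧ b ≠ b ∧ 2 ≤ edgeCount3 G u b b) by simp)]
    have key : ∀ c ∈ sAB a b,
        (if u ≠ b ∧ u ≠ c ∧ b ≠ c ∧ 2 ≤ edgeCount3 G u b c then w u * w b * w c else 0)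
        = (if u ≠ c ∧ 2 ≤ edgeCount3 G b u c then w b * (w u * w c) else 0) := by
      intro c hc
      obtain ⟨hca, hcb⟩ := mem_sAB a b hc
      exact if_congr (by rw [cntL G u b c]; simp [hub, Ne.symm hcb]) (by ring) rfl
    rw [sum_congr rfl key, pull (sAB a b) _ (w b) _]
    ring
  have t3 : ∀ v ∈ sAB a b, ∑ c : V,
      (if u ≠ v ∧ u ≠ c ∧ v ≠ c ∧ 2 ≤ edgeCount3 G u v c then w u * w v * w c else 0)
      = (if u ≠ v ∧ 2 ≤ edgeCount3 G a u v then w a * (w u * w v) else 0)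
        + (if u ≠ v ∧ 2 ≤ edgeCount3 G b u v then w b * (w u * w v) else 0)
        + ∑ c ∈ sAB a b,
            (if u ≠ v ∧ u ≠ c ∧ v ≠ c ∧ 2 ≤ edgeCount3 G u v c then w u * w v * w c else 0) := by
    intro v hv
    obtain ⟨hva, hvb⟩ := mem_sAB a b hv
    rw [sum_split a b hab,
      if_congr (show (u ≠ v ∧ u ≠ a ∧ v ≠ a ∧ 2 ≤ edgeCount3 G u v a)
          ↔ (u ≠ v ∧ 2 ≤ edgeCount3 G a u v) by
            rw [cntR G u v a, cntL G u a v]; simp [hua, hva])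
        (show w u * w v * w a = w a * (w u * w v) by ring) rfl,
      if_congr (show (u ≠ v ∧ u ≠ b ∧ v ≠ b ∧ 2 ≤ edgeCount3 G u v b)
          ↔ (u ≠ v ∧ 2 ≤ edgeCount3 G b u v) by
            rw [cntR G u v b, cntL G u b v]; simp [hub, hvb])
        (show w u * w v * w b = w b * (w u * w v) by ring) rfl]
  rw [t1, t2, sum_congr rfl t3, Finset.sum_add_distrib, Finset.sum_add_distrib,
    pull (sAB a b) _ (w a) _, pull (sAB a b) _ (w b) _]
  ring

lemma T_closed (hab : a ≠ b) (w : V → ℝ) :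
    ∑ u : V, ∑ v : V, ∑ c : V,
      (if u ≠ v ∧ u ≠ c ∧ v ≠ c ∧ 2 ≤ edgeCount3 G u v c then w u * w v * w c else 0)
    = TT G a b w + 3 * (w a * QQ G a b a w) + 3 * (w b * QQ G a b b w)
      + 6 * (w a * w b * PP G a b w) := by
  rw [sum_split a b hab, blockA G a b hab w, blockB G a b hab w,
    sum_congr rfl (fun u hu => rowS G a b hab w u (mem_sAB a b hu).1 (mem_sAB a b hu).2),
    Finset.sum_add_distrib, Finset.sum_add_distrib, Finset.sum_add_distrib]
  have h1 : ∑ u ∈ sAB a b,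
      2 * (if 2 ≤ edgeCount3 G a b u then (w a * w b) * w u else 0)
      = 2 * ((w a * w b) * PP G a b w) := by
    rw [← Finset.mul_sum, pull (sAB a b) _ (w a * w b) w, PP]
  have h2 : ∑ u ∈ sAB a b,
      2 * (w a * ∑ c ∈ sAB a b, (if u ≠ c ∧ 2 ≤ edgeCount3 G a u c then w u * w c else 0))
      = 2 * (w a * QQ G a b a w) := by
    rw [← Finset.mul_sum, ← Finset.mul_sum, QQ]
  have h3 : ∑ u ∈ sAB a b,
      2 * (w b * ∑ c ∈ sAB a b, (if u ≠ c ∧ 2 ≤ edgeCount3 G b u c then w u * w c else 0))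
      = 2 * (w b * QQ G a b b w) := by
    rw [← Finset.mul_sum, ← Finset.mul_sum, QQ]
  rw [h1, h2, h3, ← TT]
  ring


noncomputable def SS (c : V) (w : V → ℝ) : ℝ := ∑ v ∈ sAB a b, if G.Adj c v then w v else 0
noncomputable def RR (c : V) (w : V → ℝ) : ℝ := ∑ v ∈ sAB a b, if G.Adj c v then w v ^ 2 else 0
noncomputable def EE (w : V → ℝ) : ℝ :=
  ∑ u ∈ sAB a b, ∑ v ∈ sAB a b, if G.Adj u v then w u * w v else 0
noncomputable def DD (w : V → ℝ) : ℝ :=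
  ∑ u ∈ sAB a b, ∑ v ∈ sAB a b, if G.Adj u v then w u ^ 2 * w v else 0

lemma ite_adj_comm (u v : V) (r t : ℝ) :
    (if G.Adj u v then r else t) = (if G.Adj v u then r else t) :=
  if_congr (G.adj_comm u v) rfl rfl

variable {w1 w2 : V → ℝ}

lemma SS_congr (c : V) (h : ∀ v ∈ sAB a b, w1 v = w2 v) :
    SS G a b c w1 = SS G a b c w2 :=
  sum_congr rfl fun v hv => by rw [h v hv]

lemma RR_congr (c : V) (h : ∀ v ∈ sAB a b, w1 v = w2 v) :
    RR G a b c w1 = RR G a b c w2 :=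
  sum_congr rfl fun v hv => by rw [h v hv]

lemma EE_congr (h : ∀ v ∈ sAB a b, w1 v = w2 v) : EE G a b w1 = EE G a b w2 :=
  sum_congr rfl fun u hu => sum_congr rfl fun v hv => by rw [h u hu, h v hv]

lemma DD_congr (h : ∀ v ∈ sAB a b, w1 v = w2 v) : DD G a b w1 = DD G a b w2 :=
  sum_congr rfl fun u hu => sum_congr rfl fun v hv => by rw [h u hu, h v hv]

lemma QQ_congr (c : V) (h : ∀ v ∈ sAB a b, w1 v = w2 v) :
    QQ G a b c w1 = QQ G a b c w2 :=
  sum_congr rfl fun u hu => sum_congr rfl fun v hv => by rw [h u hu, h v hv]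

lemma PP_congr (h : ∀ v ∈ sAB a b, w1 v = w2 v) : PP G a b w1 = PP G a b w2 :=
  sum_congr rfl fun v hv => by rw [h v hv]

lemma TT_congr (h : ∀ v ∈ sAB a b, w1 v = w2 v) : TT G a b w1 = TT G a b w2 :=
  sum_congr rfl fun u hu => sum_congr rfl fun v hv => sum_congr rfl fun c hc => by
    rw [h u hu, h v hv, h c hc]

lemma E_closed (hab : a ≠ b) (hnadj : ¬ G.Adj a b) (w : V → ℝ) :
    ∑ u : V, ∑ v : V, (if G.Adj u v then w u * w v else 0)
    = EE G a b w + 2 * (w a * SS G a b a w) + 2 * (w b * SS G a b b w) := by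
  have hnadj' : ¬ G.Adj b a := fun h => hnadj (G.adj_symm h)
  rw [sum_split a b hab]
  have e1 : ∑ v : V, (if G.Adj a v then w a * w v else 0) = w a * SS G a b a w := by
    rw [sum_split a b hab, if_neg (G.irrefl), if_neg hnadj, SS, pull]
    ring
  have e2 : ∑ v : V, (if G.Adj b v then w b * w v else 0) = w b * SS G a b b w := by
    rw [sum_split a b hab, if_neg hnadj', if_neg (G.irrefl), SS, pull]
    ring
  have e3 : ∑ u ∈ sAB a b, ∑ v : V, (if G.Adj u v then w u * w v else 0)
      = w a * SS G a b a w + w b * SS G a b b w + EE G a b w := by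
    have key : ∀ u ∈ sAB a b, ∑ v : V, (if G.Adj u v then w u * w v else 0)
        = (if G.Adj a u then w a * w u else 0) + (if G.Adj b u then w b * w u else 0)
          + ∑ v ∈ sAB a b, (if G.Adj u v then w u * w v else 0) := by
      intro u hu
      rw [sum_split a b hab, ite_adj_comm G u a, ite_adj_comm G u b, mul_comm (w u) (w a),
        mul_comm (w u) (w b)]
    rw [Finset.sum_congr rfl key, Finset.sum_add_distrib, Finset.sum_add_distrib,
      pull _ _ (w a), pull _ _ (w b)]
    rfl
  rw [e1, e2, e3]; ring

lemma D_closed (hab : a ≠ b) (hnadj : ¬ G.Adj a b) (w : V → ℝ) :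
    ∑ u : V, ∑ v : V, (if G.Adj u v then w u ^ 2 * w v else 0)
    = DD G a b w + w a ^ 2 * SS G a b a w + w b ^ 2 * SS G a b b w
      + w a * RR G a b a w + w b * RR G a b b w := by
  have hnadj' : ¬ G.Adj b a := fun h => hnadj (G.adj_symm h)
  rw [sum_split a b hab]
  have e1 : ∑ v : V, (if G.Adj a v then w a ^ 2 * w v else 0) = w a ^ 2 * SS G a b a w := by
    rw [sum_split a b hab, if_neg (G.irrefl), if_neg hnadj, SS, pull]
    ring
  have e2 : ∑ v : V, (if G.Adj b v then w b ^ 2 * w v else 0) = w b ^ 2 * SS G a b b w := by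
    rw [sum_split a b hab, if_neg hnadj', if_neg (G.irrefl), SS, pull]
    ring
  have e3 : ∑ u ∈ sAB a b, ∑ v : V, (if G.Adj u v then w u ^ 2 * w v else 0)
      = w a * RR G a b a w + w b * RR G a b b w + DD G a b w := by
    have key : ∀ u ∈ sAB a b, ∑ v : V, (if G.Adj u v then w u ^ 2 * w v else 0)
        = (if G.Adj a u then w a * w u ^ 2 else 0) + (if G.Adj b u then w b * w u ^ 2 else 0)
          + ∑ v ∈ sAB a b, (if G.Adj u v then w u ^ 2 * w v else 0) := by
      intro u hu
      rw [sum_split a b hab, ite_adj_comm G u a, ite_adj_comm G u b, mul_comm (w u ^ 2) (w a),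
        mul_comm (w u ^ 2) (w b)]
    rw [Finset.sum_congr rfl key, Finset.sum_add_distrib, Finset.sum_add_distrib,
      pull _ _ (w a), pull _ _ (w b)]
    rfl
  rw [e1, e2, e3]; ring


end DelAux

open DelAux in
theorem deletion_identity {V : Type*} [Fintype V] [DecidableEq V]
    (G : SimpleGraph V) [DecidableRel G.Adj] (a b : V) (hab : a ≠ b)
    (hnadj : ¬ G.Adj a b) (x : V → ℝ)
    (hx : ∀ v, 0 ≤ x v) (hsum : ∑ v : V, x v = 1) :
    x a * lagrangianBF G (transferWeight x a b)
      + x b * lagrangianBF G (transferWeight x b a)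
      - (x a + x b) * lagrangianBF G x
    = x a * x b * (x a + x b) *
        ((1 / 2) * ((∑ v : V, if G.Adj a v then x v else 0)
            + (∑ v : V, if G.Adj b v then x v else 0)
            - ((∑ v : V, if G.Adj a v then x v else 0)
                - (∑ v : V, if G.Adj b v then x v else 0)) ^ 2)
          - ∑ v : V, if v ≠ a ∧ v ≠ b ∧ 2 ≤ edgeCount3 G a b v then x v else 0) := by
  have hab' : b ≠ a := Ne.symm hab
  have hnadj' : ¬ G.Adj b a := fun h => hnadj (G.adj_symm h)
  have hy : ∀ v ∈ sAB a b, transferWeight x a b v = x v := by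
    intro v hv
    obtain ⟨hva, hvb⟩ := mem_sAB a b hv
    simp [transferWeight, Function.update_of_ne hva, Function.update_of_ne hvb]
  have hz : ∀ v ∈ sAB a b, transferWeight x b a v = x v := by
    intro v hv
    obtain ⟨hva, hvb⟩ := mem_sAB a b hv
    simp [transferWeight, Function.update_of_ne hva, Function.update_of_ne hvb]
  have hya : transferWeight x a b a = x a + x b := by simp [transferWeight]
  have hyb : transferWeight x a b b = 0 := by
    simp [transferWeight, Function.update_of_ne hab']
  have hzb : transferWeight x b a b = x b + x a := by simp [transferWeight]
  have hza : transferWeight x b a a = 0 := by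
    simp [transferWeight, Function.update_of_ne hab]
  have hSa : (∑ v : V, if G.Adj a v then x v else 0) = SS G a b a x := by
    rw [sum_split a b hab, if_neg (G.irrefl), if_neg hnadj, SS]
    ring
  have hSb : (∑ v : V, if G.Adj b v then x v else 0) = SS G a b b x := by
    rw [sum_split a b hab, if_neg hnadj', if_neg (G.irrefl), SS]
    ring
  have hP : (∑ v : V, if v ≠ a ∧ v ≠ b ∧ 2 ≤ edgeCount3 G a b v then x v else 0)
      = PP G a b x := by
    rw [sum_split a b hab,
      if_neg (show ¬(a ≠ a ∧ a ≠ b ∧ 2 ≤ edgeCount3 G a b a) by simp),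
      if_neg (show ¬(b ≠ a ∧ b ≠ b ∧ 2 ≤ edgeCount3 G a b b) by simp),
      sum_congr rfl (fun v hv =>
        if_congr (show (v ≠ a ∧ v ≠ b ∧ 2 ≤ edgeCount3 G a b v) ↔ (2 ≤ edgeCount3 G a b v)
            by simp [(mem_sAB a b hv).1, (mem_sAB a b hv).2]) rfl rfl), PP]
    ring
  simp only [lagrangianBF]
  rw [T_closed G a b hab (transferWeight x a b), T_closed G a b hab (transferWeight x b a),
    T_closed G a b hab x,
    D_closed G a b hab hnadj (transferWeight x a b),
    D_closed G a b hab hnadj (transferWeight x b a),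
    D_closed G a b hab hnadj x,
    E_closed G a b hab hnadj (transferWeight x a b),
    E_closed G a b hab hnadj (transferWeight x b a),
    E_closed G a b hab hnadj x,
    TT_congr G a b hy, TT_congr G a b hz,
    QQ_congr G a b a hy, QQ_congr G a b b hy, QQ_congr G a b a hz, QQ_congr G a b b hz,
    PP_congr G a b hy, PP_congr G a b hz,
    DD_congr G a b hy, DD_congr G a b hz,
    SS_congr G a b a hy, SS_congr G a b b hy, SS_congr G a b a hz, SS_congr G a b b hz,
    RR_congr G a b a hy, RR_congr G a b b hy, RR_congr G a b a hz, RR_congr G a b b hz,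
    EE_congr G a b hy, EE_congr G a b hz,
    hya, hyb, hza, hzb, hSa, hSb, hP]
  ring
end

section
/- For all reals a, b, c with a, b, c ≥ 0, a ≥ b ≥ c, and a + b + c ≤ 1, the polynomial 3/32 - (1/6)(1 - a^3 - b^3 - c^3) + (1/8)(1 - a^2 - b^2 - c + ca + cb)^2 is nonnegative, and it equals 0 at (a,b,c) = (1/2, 1/2, 0). -/
theorem final_poly_nonneg :
    (∀ a b c : ℝ, 0 ≤ a → 0 ≤ b → 0 ≤ c → c ≤ b → b ≤ a → a + b + c ≤ 1 →
      0 ≤ 3 / 32 - (1 / 6) * (1 - a ^ 3 - b ^ 3 - c ^ 3)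
          + (1 / 8) * (1 - a ^ 2 - b ^ 2 - c + c * a + c * b) ^ 2) ∧
    3 / 32 - (1 / 6) * (1 - (1/2:ℝ) ^ 3 - (1/2:ℝ) ^ 3 - 0 ^ 3)
      + (1 / 8) * (1 - (1/2:ℝ) ^ 2 - (1/2:ℝ) ^ 2 - 0 + 0 * (1/2:ℝ) + 0 * (1/2:ℝ)) ^ 2 = 0 := by
  constructor
  · intro a b c ha hb hc hcb hba habc
    have hu : (0:ℝ) ≤ 1 - a - b - c := by linarith
    have hd : (0:ℝ) ≤ a - b := by linarith
    have hw : (0:ℝ) ≤ b - c := by linarith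
    linarith [(mul_nonneg hu hu), (mul_nonneg (mul_nonneg hu hu) hw), (mul_nonneg (mul_nonneg (mul_nonneg hu hu) hu) hu), (mul_nonneg (mul_nonneg hc hu) hw), (mul_nonneg (mul_nonneg (mul_nonneg hc hu) hw) hw), (mul_nonneg (mul_nonneg (mul_nonneg hc hu) hu) hu), (mul_nonneg (mul_nonneg hc hc) hw), (mul_nonneg (mul_nonneg (mul_nonneg hd hd) hc) hu), (mul_nonneg (mul_nonneg (mul_nonneg hc hc) hu) hu), (mul_nonneg (mul_nonneg (mul_nonneg hd hc) hu) hw), (mul_nonneg (mul_nonneg hd hd) hw), (mul_nonneg (mul_nonneg (mul_nonneg hc hc) hc) hc), (mul_nonneg (mul_nonneg hd hu) hu), (mul_nonneg (mul_nonneg (mul_nonneg hd hu) hu) hu), (mul_nonneg (mul_nonneg hd hc) hu), (mul_nonneg (mul_nonneg hc hu) hu), (mul_nonneg (mul_nonneg (mul_nonneg hd hu) hu) hw), (mul_nonneg (mul_nonneg (mul_nonneg hc hc) hw) hw), (mul_nonneg (mul_nonneg (mul_nonneg hd hc) hc) hc), (mul_nonneg (mul_nonneg (mul_nonneg hd hd)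 hc) hw), (mul_nonneg (mul_nonneg (mul_nonneg hd hc) hu) hu), (mul_nonneg (mul_nonneg (mul_nonneg hd hd) hd) hw), (mul_nonneg (mul_nonneg (mul_nonneg hd hc) hc) hw), (mul_nonneg (mul_nonneg (mul_nonneg hd hd) hc) hc), (mul_nonneg (mul_nonneg (mul_nonneg hd hd) hw) hw), mul_nonneg hd (sq_nonneg ((a-b)-(1-a-b-c))), mul_nonneg (mul_nonneg hd hd) (sq_nonneg ((a-b)-(1-a-b-c))), mul_nonneg (mul_nonneg hd hd) (sq_nonneg ((a-b)-c)), sq_nonneg (1/2 - a^2 - b^2 - c + c*a + c*b)]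
  · norm_num
end
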